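/- Fix T ≥ 1, a real number ε > 0, n×n real matrices A₁,…,A_{T−1}, symmetric positive definite n×n matrices W₁,…,W_{T−1}, and a symmetric positive definite n×n matrix P₀. Consider the set F of tuples (P₁,…,P_T, Π₁,…,Π_T) of symmetric n×n real matrices satisfying: Π_t ⪰ ε I for all t = 1,…,T; P₁ ⪯ P₀; P_T = Π_T; P_{t+1} ⪯ A_t P_t A_tᵀ + W_t for t = 1,…,T−1; and the block matrix [[P_t − Π_t, P_t A_tᵀ], [A_t P_t, W_t + A_t P_t A_tᵀ]] is positive semidefinite for t = 1,…,T−1. Then F is a compact subset of the space of tuples of symmetric n×n matrices. -/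

import Mathlib

open Matrix

variable {n : ℕ} {m : Type*} [Fintype m] [DecidableEq m]

private lemma psd_diag {M : Matrix m m ℝ} (hM : M.PosSemidef) (a : m) :
    0 ≤ M a a := by
  have := hM.dotProduct_mulVec_nonneg (Pi.single a 1)
  simpa [mulVec_single, dotProduct_single, single_dotProduct] using this

private lemma psd_trace_nonneg {M : Matrix m m ℝ} (hM : M.PosSemidef) :
    0 ≤ M.trace := Finset.sum_nonneg fun a _ => psd_diag hM a

private lemma psd_abs_entry_le_trace {M : Matrix m m ℝ} (hM : M.PosSemidef)
    (a b : m) : |M a b| ≤ M.trace := by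
  have hsym : M b a = M a b := by
    have := hM.1.apply b a
    simpa using this.symm
  rcases eq_or_ne a b with rfl | hab
  · have h1 : 0 ≤ M a a := psd_diag hM a
    rw [abs_of_nonneg h1]
    calc M a a = ∑ i ∈ {a}, M i i := by simp
    _ ≤ M.trace := Finset.sum_le_sum_of_subset_of_nonneg (Finset.subset_univ _)
        (fun i _ _ => psd_diag hM i)
  · have hplus := hM.dotProduct_mulVec_nonneg (Pi.single a 1 + Pi.single b 1)
    have hminus := hM.dotProduct_mulVec_nonneg (Pi.single a 1 - Pi.single b 1)
    simp only [star_trivial, mulVec_add, mulVec_sub, dotProduct_add, dotProduct_sub,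
      add_dotProduct, sub_dotProduct, mulVec_single, dotProduct_single, single_dotProduct,
      mul_one, one_mul, MulOpposite.op_one, one_smul, col_apply] at hplus hminus
    have key : |M a b| * 2 ≤ M a a + M b b := by
      rcases abs_cases (M a b) with ⟨h,_⟩|⟨h,_⟩ <;> rw [h] <;> nlinarith [hsym]
    have h2 : M a a + M b b ≤ M.trace := by
      calc M a a + M b b = ∑ i ∈ {a, b}, M i i := by
            rw [Finset.sum_insert (by simpa using hab), Finset.sum_singleton]
      _ ≤ M.trace := Finset.sum_le_sum_of_subset_of_nonneg (Finset.subset_univ _)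
          (fun i _ _ => psd_diag hM i)
    nlinarith [abs_nonneg (M a b)]

private lemma isClosed_psd : IsClosed {M : Matrix m m ℝ | M.PosSemidef} := by
  have : {M : Matrix m m ℝ | M.PosSemidef}
      = {M | Mᴴ = M} ∩ ⋂ x : m → ℝ, {M | 0 ≤ (star x) ⬝ᵥ (M *ᵥ x)} := by
    ext M
    rw [Set.mem_setOf_eq, posSemidef_iff_dotProduct_mulVec]
    simp only [Set.mem_setOf_eq, Set.mem_inter_iff, Set.mem_iInter, Matrix.PosSemidef,
      Matrix.IsHermitian]
  rw [this]
  refine IsClosed.inter (isClosed_eq continuous_id.matrix_conjTranspose continuous_id)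
    (isClosed_iInter fun x => isClosed_le continuous_const ?_)
  have : Continuous fun M : Matrix m m ℝ => ∑ i, (star x) i * ∑ j, M i j * x j := by
    refine continuous_finset_sum _ fun i _ => Continuous.mul continuous_const ?_
    exact continuous_finset_sum _ fun j _ =>
      (continuous_id.matrix_elem i j).mul continuous_const
  exact this

private lemma topleft_psd {X B C D : Matrix m m ℝ}
    (h : (Matrix.fromBlocks X B C D).PosSemidef) : X.PosSemidef := by
  have h2 := h.submatrix (Sum.inl : m → m ⊕ m)
  have e : (Matrix.fromBlocks X B C D).submatrix Sum.inl Sum.inl = X := by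
    ext i j; simp [Matrix.fromBlocks]
  rwa [e] at h2

theorem stmt10 {n : ℕ} (T : ℕ) (hT : 1 ≤ T) (ε : ℝ) (hε : 0 < ε)
    (A W : ℕ → Matrix (Fin n) (Fin n) ℝ)
    (hW : ∀ t, 1 ≤ t → t ≤ T - 1 → (W t).PosDef)
    (P₀ : Matrix (Fin n) (Fin n) ℝ) (hP₀ : P₀.PosDef) :
    IsCompact {PQ : (Fin T → Matrix (Fin n) (Fin n) ℝ) × (Fin T → Matrix (Fin n) (Fin n) ℝ) |
      (∀ i, (PQ.1 i).IsHermitian) ∧ (∀ i, (PQ.2 i).IsHermitian) ∧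
      (∀ i, (PQ.2 i - ε • (1 : Matrix (Fin n) (Fin n) ℝ)).PosSemidef) ∧
      (P₀ - PQ.1 ⟨0, hT⟩).PosSemidef ∧
      PQ.1 ⟨T - 1, by omega⟩ = PQ.2 ⟨T - 1, by omega⟩ ∧
      (∀ i : ℕ, ∀ h : i + 1 < T,
        (A (i + 1) * PQ.1 ⟨i, by omega⟩ * (A (i + 1))ᵀ + W (i + 1)
          - PQ.1 ⟨i + 1, h⟩).PosSemidef) ∧
      (∀ i : ℕ, ∀ h : i + 1 < T,
        (Matrix.fromBlocks
          (PQ.1 ⟨i, by omega⟩ - PQ.2 ⟨i, by omega⟩)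
          (PQ.1 ⟨i, by omega⟩ * (A (i + 1))ᵀ)
          (A (i + 1) * PQ.1 ⟨i, by omega⟩)
          (W (i + 1) + A (i + 1) * PQ.1 ⟨i, by omega⟩ * (A (i + 1))ᵀ)).PosSemidef)} := by
  classical
  -- continuity of evaluation maps
  have cont1 : ∀ i : Fin T, Continuous fun PQ :
      (Fin T → Matrix (Fin n) (Fin n) ℝ) × (Fin T → Matrix (Fin n) (Fin n) ℝ) => PQ.1 i :=
    fun i => (continuous_apply i).comp continuous_fst
  have cont2 : ∀ i : Fin T, Continuous fun PQ :
      (Fin T → Matrix (Fin n) (Fin n) ℝ) × (Fin T → Matrix (Fin n) (Fin n) ℝ) => PQ.2 i :=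
    fun i => (continuous_apply i).comp continuous_snd
  -- the set is closed
  have hclosed : IsClosed {PQ : (Fin T → Matrix (Fin n) (Fin n) ℝ) ×
      (Fin T → Matrix (Fin n) (Fin n) ℝ) |
      (∀ i, (PQ.1 i).IsHermitian) ∧ (∀ i, (PQ.2 i).IsHermitian) ∧
      (∀ i, (PQ.2 i - ε • (1 : Matrix (Fin n) (Fin n) ℝ)).PosSemidef) ∧
      (P₀ - PQ.1 ⟨0, hT⟩).PosSemidef ∧
      PQ.1 ⟨T - 1, by omega⟩ = PQ.2 ⟨T - 1, by omega⟩ ∧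
      (∀ i : ℕ, ∀ h : i + 1 < T,
        (A (i + 1) * PQ.1 ⟨i, by omega⟩ * (A (i + 1))ᵀ + W (i + 1)
          - PQ.1 ⟨i + 1, h⟩).PosSemidef) ∧
      (∀ i : ℕ, ∀ h : i + 1 < T,
        (Matrix.fromBlocks
          (PQ.1 ⟨i, by omega⟩ - PQ.2 ⟨i, by omega⟩)
          (PQ.1 ⟨i, by omega⟩ * (A (i + 1))ᵀ)
          (A (i + 1) * PQ.1 ⟨i, by omega⟩)
          (W (i + 1) + A (i + 1) * PQ.1 ⟨i, by omega⟩ * (A (i + 1))ᵀ)).PosSemidef)} := by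
    simp only [Set.setOf_and]
    refine IsClosed.inter ?_ (IsClosed.inter ?_ (IsClosed.inter ?_ (IsClosed.inter ?_
      (IsClosed.inter ?_ (IsClosed.inter ?_ ?_)))))
    · rw [Set.setOf_forall]
      exact isClosed_iInter fun i =>
        isClosed_eq ((cont1 i).matrix_conjTranspose) (cont1 i)
    · rw [Set.setOf_forall]
      exact isClosed_iInter fun i =>
        isClosed_eq ((cont2 i).matrix_conjTranspose) (cont2 i)
    · rw [Set.setOf_forall]
      exact isClosed_iInter fun i =>
        isClosed_psd.preimage ((cont2 i).sub continuous_const)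
    · exact isClosed_psd.preimage (continuous_const.sub (cont1 _))
    · exact isClosed_eq (cont1 _) (cont2 _)
    · rw [Set.setOf_forall]
      refine isClosed_iInter fun i => ?_
      rw [Set.setOf_forall]
      refine isClosed_iInter fun h => ?_
      exact isClosed_psd.preimage
        ((((continuous_const.matrix_mul (cont1 _)).matrix_mul continuous_const).add
          continuous_const).sub (cont1 _))
    · rw [Set.setOf_forall]
      refine isClosed_iInter fun i => ?_
      rw [Set.setOf_forall]
      refine isClosed_iInter fun h => ?_
      exact isClosed_psd.preimage
        (Continuous.matrix_fromBlocks ((cont1 _).sub (cont2 _))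
          ((cont1 _).matrix_mul continuous_const)
          (continuous_const.matrix_mul (cont1 _))
          (continuous_const.add ((continuous_const.matrix_mul (cont1 _)).matrix_mul
            continuous_const)))
  -- inductive upper bounds
  set B : ℕ → Matrix (Fin n) (Fin n) ℝ :=
    fun k => Nat.rec P₀ (fun k Bk => A (k+1) * Bk * (A (k+1))ᵀ + W (k+1)) k with hBdef
  have hBs : ∀ k, B (k+1) = A (k+1) * B k * (A (k+1))ᵀ + W (k+1) := fun k => rfl
  have hBpsd : ∀ k, k + 1 ≤ T → (B k).PosSemidef := by
    intro k
    induction k with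
    | zero => exact fun _ => hP₀.posSemidef
    | succ k ih =>
      intro hk
      rw [hBs]
      refine Matrix.PosSemidef.add ?_ ((hW (k+1) (by omega) (by omega)).posSemidef)
      have := (ih (by omega)).mul_mul_conjTranspose_same (A (k+1))
      rwa [conjTranspose_eq_transpose_of_trivial] at this
  set c : ℝ := ∑ k ∈ Finset.range T, (B k).trace with hc
  have htrace_le : ∀ k, k < T → (B k).trace ≤ c := by
    intro k hk
    exact Finset.single_le_sum (f := fun k => (B k).trace)
      (fun i hi => psd_trace_nonneg (hBpsd i (by
        have := Finset.mem_range.mp hi; omega))) (Finset.mem_range.mpr hk)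
  -- ε • 1 is PSD
  have hsmul1 : (ε • (1 : Matrix (Fin n) (Fin n) ℝ)).PosSemidef := by
    rw [Matrix.smul_one_eq_diagonal]
    exact Matrix.PosSemidef.diagonal fun i => hε.le
  -- compact superset
  set K : Set (Fin T → Matrix (Fin n) (Fin n) ℝ) :=
    Set.univ.pi fun _ => Set.univ.pi fun _ => Set.univ.pi fun _ => Set.Icc (-c) c with hKdef
  have hK : IsCompact K :=
    isCompact_univ_pi fun _ => isCompact_univ_pi fun _ => isCompact_univ_pi fun _ =>
      isCompact_Icc
  refine IsCompact.of_isClosed_subset (hK.prod hK) hclosed ?_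
  rintro PQ ⟨h1, h2, h3, h4, h5, h6, h7⟩
  -- pointwise lower/upper bounds
  have hPge : ∀ i : Fin T, (PQ.1 i - PQ.2 i).PosSemidef := by
    intro i
    by_cases hi : i.1 + 1 < T
    · exact topleft_psd (h7 i.1 hi)
    · have hi' : i = ⟨T - 1, by omega⟩ := Fin.ext (by simp; omega)
      rw [hi', h5]
      simpa using (Matrix.PosSemidef.zero (n := Fin n) (R := ℝ))
  have hPipsd : ∀ i : Fin T, (PQ.2 i).PosSemidef := by
    intro i
    have h := (h3 i).add hsmul1
    have e : (PQ.2 i - ε • (1 : Matrix (Fin n) (Fin n) ℝ)) + ε • 1 = PQ.2 i := by abel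
    rwa [e] at h
  have hPpsd : ∀ i : Fin T, (PQ.1 i).PosSemidef := by
    intro i
    have h := (hPge i).add (hPipsd i)
    have e : (PQ.1 i - PQ.2 i) + PQ.2 i = PQ.1 i := by abel
    rwa [e] at h
  have hPle : ∀ k (hk : k < T), (B k - PQ.1 ⟨k, hk⟩).PosSemidef := by
    intro k
    induction k with
    | zero => exact fun hk => h4
    | succ k ih =>
      intro hk
      have hk' : k < T := by omega
      have hconj := (ih hk').mul_mul_conjTranspose_same (A (k+1))
      rw [conjTranspose_eq_transpose_of_trivial] at hconj
      have h := hconj.add (h6 k hk)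
      have e : A (k+1) * (B k - PQ.1 ⟨k, hk'⟩) * (A (k+1))ᵀ
          + (A (k+1) * PQ.1 ⟨k, hk'⟩ * (A (k+1))ᵀ + W (k+1) - PQ.1 ⟨k+1, hk⟩)
          = B (k+1) - PQ.1 ⟨k+1, hk⟩ := by
        rw [hBs, mul_sub, sub_mul]; abel
      rwa [e] at h
  have hPile : ∀ i : Fin T, (B i.1 - PQ.2 i).PosSemidef := by
    intro i
    have h := (hPle i.1 i.2).add (hPge i)
    have e : (B i.1 - PQ.1 i) + (PQ.1 i - PQ.2 i) = B i.1 - PQ.2 i := by abel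
    rwa [e] at h
  have hbound : ∀ (X : Matrix (Fin n) (Fin n) ℝ) (i : Fin T), X.PosSemidef →
      (B i.1 - X).PosSemidef → ∀ a b, X a b ∈ Set.Icc (-c) c := by
    intro X i hX hBX a b
    have h1 := psd_abs_entry_le_trace hX a b
    have h2 : X.trace ≤ (B i.1).trace := by
      have h := psd_trace_nonneg hBX
      rw [Matrix.trace_sub] at h
      linarith
    have h3 := htrace_le i.1 i.2
    have := abs_le.mp (h1.trans (h2.trans h3))
    exact ⟨this.1, this.2⟩
  constructor
  · intro i _
    intro a _
    intro b _
    exact hbound (PQ.1 i) i (hPpsd i) (hPle i.1 i.2) a b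
  · intro i _
    intro a _
    intro b _
    exact hbound (PQ.2 i) i (hPipsd i) (hPile i) a b
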